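/- The map h, which sends each positive definite real symmetric n×n matrix V to the unique positive definite matrix in C maximizing f(Θ; V) over positive definite Θ ∈ C, is continuous on the open cone of positive definite real symmetric n×n matrices. -/

import Mathlib

open Matrix

/-- `maxProp n Z V Θ` says that `Θ` is a positive definite matrix in the constraint set
`C = {Θ symmetric : Θ_ij = 0 for (i,j) ∈ Z}` maximizing `f(·; V) = log det · − tr (V ·)`
over positive definite matrices in `C`. -/
def maxProp (n : ℕ) (Z : Set (Fin n × Fin n)) (V Θ : Matrix (Fin n) (Fin n) ℝ) : Prop :=
  Θ.PosDef ∧ (∀ p ∈ Z, Θ p.1 p.2 = 0) ∧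
    ∀ Θ' : Matrix (Fin n) (Fin n) ℝ, Θ'.PosDef → (∀ p ∈ Z, Θ' p.1 p.2 = 0) →
      Real.log Θ'.det - (V * Θ').trace ≤ Real.log Θ.det - (V * Θ).trace

section Helpers

open Finset

attribute [local instance] Matrix.normedAddCommGroup Matrix.normedSpace

variable {n : ℕ}

lemma psd_diag_nonneg {Θ : Matrix (Fin n) (Fin n) ℝ} (hΘ : Θ.PosSemidef) (i : Fin n) :
    0 ≤ Θ i i := by
  have := hΘ.dotProduct_mulVec_nonneg (Pi.single i 1)
  simpa [Matrix.mulVec_single, single_dotProduct] using this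

lemma psd_trace_nonneg {Θ : Matrix (Fin n) (Fin n) ℝ} (hΘ : Θ.PosSemidef) : 0 ≤ Θ.trace := by
  exact Finset.sum_nonneg fun i _ => psd_diag_nonneg hΘ i

open scoped MatrixOrder in
lemma trace_mul_nonneg {A B : Matrix (Fin n) (Fin n) ℝ} (hA : A.PosSemidef)
    (hB : B.PosSemidef) : 0 ≤ (A * B).trace := by
  obtain ⟨S, rfl⟩ := CStarAlgebra.nonneg_iff_eq_star_mul_self.mp hA.nonneg
  rw [Matrix.mul_assoc, Matrix.trace_mul_comm]
  exact psd_trace_nonneg (hB.mul_mul_conjTranspose_same S)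
lemma psd_diag_le_trace {Θ : Matrix (Fin n) (Fin n) ℝ} (hΘ : Θ.PosSemidef) (i : Fin n) :
    Θ i i ≤ Θ.trace :=
  Finset.single_le_sum (fun j _ => psd_diag_nonneg hΘ j) (Finset.mem_univ i)

lemma psd_entry_abs_le_trace {Θ : Matrix (Fin n) (Fin n) ℝ} (hΘ : Θ.PosSemidef) (i j : Fin n) :
    |Θ i j| ≤ Θ.trace := by
  rcases eq_or_ne i j with rfl | hij
  · rw [abs_of_nonneg (psd_diag_nonneg hΘ i)]; exact psd_diag_le_trace hΘ i
  · have hsym : Θ j i = Θ i j := by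
      calc Θ j i = Θᴴ i j := by simp [Matrix.conjTranspose_apply]
        _ = Θ i j := by rw [hΘ.1]
    have quad : ∀ c : ℝ, 0 ≤ Θ i i + c * c * Θ j j + 2 * c * Θ i j := by
      intro c
      set x : Fin n → ℝ := Pi.single i 1 + Pi.single j c with hxdef
      have this0 := hΘ.dotProduct_mulVec_nonneg x
      have hx : star x = x := star_trivial x
      rw [hx] at this0
      simp only [hxdef, Matrix.mulVec_add, Matrix.mulVec_single, add_dotProduct,
        single_dotProduct, Pi.add_apply, Pi.single_apply, if_neg hij, if_neg hij.symm,
        if_pos rfl, Pi.smul_apply, op_smul_eq_mul, Matrix.col_apply] at this0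
      rw [hsym] at this0; ring_nf at this0 ⊢; linarith
    have h1 := quad 1
    have h2 := quad (-1)
    have hd : Θ i i + Θ j j ≤ Θ.trace := by
      have : Θ i i + Θ j j = ∑ k ∈ ({i, j} : Finset (Fin n)), Θ k k := by
        rw [Finset.sum_pair hij]
      rw [this, Matrix.trace]
      exact Finset.sum_le_sum_of_subset_of_nonneg (Finset.subset_univ _)
        (fun k _ _ => psd_diag_nonneg hΘ k)
    rw [abs_le]
    constructor <;> nlinarith

lemma herm_trace_eq_sum {Θ : Matrix (Fin n) (Fin n) ℝ} (hΘ : Θ.IsHermitian) :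
    Θ.trace = ∑ i, hΘ.eigenvalues i := by
  have h := hΘ.spectral_theorem
  have : Θ.trace = (Matrix.diagonal (RCLike.ofReal ∘ hΘ.eigenvalues)).trace := by
    conv_lhs => rw [h, Unitary.conjStarAlgAut_apply]
    rw [Matrix.trace_mul_comm, ← Matrix.mul_assoc]
    rw [Matrix.mem_unitaryGroup_iff'.mp (hΘ.eigenvectorUnitary).2]
    rw [Matrix.one_mul]
  rw [this, Matrix.trace_diagonal]
  simp [RCLike.ofReal_real_eq_id]

lemma pd_det_le_trace_pow {Θ : Matrix (Fin n) (Fin n) ℝ} (hΘ : Θ.PosDef) :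
    Θ.det ≤ Θ.trace ^ n := by
  have hev := hΘ.isHermitian.det_eq_prod_eigenvalues
  have hpos := hΘ.eigenvalues_pos
  have htr := herm_trace_eq_sum hΘ.isHermitian
  have hle : ∀ i, hΘ.isHermitian.eigenvalues i ≤ Θ.trace := by
    intro i
    rw [htr]
    exact Finset.single_le_sum (fun j _ => (hpos j).le) (Finset.mem_univ i)
  calc Θ.det = ∏ i, hΘ.isHermitian.eigenvalues i := by
        rw [hev]; simp [RCLike.ofReal_real_eq_id]
    _ ≤ ∏ _i : Fin n, Θ.trace :=
        Finset.prod_le_prod (fun i _ => (hpos i).le) (fun i _ => hle i)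
    _ = Θ.trace ^ n := by simp [Finset.prod_const]

lemma pd_trace_pos (hn : 0 < n) {Θ : Matrix (Fin n) (Fin n) ℝ} (hΘ : Θ.PosDef) :
    0 < Θ.trace := by
  rw [herm_trace_eq_sum hΘ.isHermitian]
  exact Finset.sum_pos (fun i _ => hΘ.eigenvalues_pos i)
    (Finset.univ_nonempty_iff.mpr ⟨⟨0, hn⟩⟩)

lemma posDef_of_posSemidef_det_pos {Θ : Matrix (Fin n) (Fin n) ℝ} (hΘ : Θ.PosSemidef)
    (hdet : 0 < Θ.det) : Θ.PosDef := by
  refine Matrix.PosDef.of_dotProduct_mulVec_pos hΘ.1 fun x hx => ?_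
  rcases lt_or_eq_of_le (hΘ.dotProduct_mulVec_nonneg x) with h | h
  · exact h
  · exfalso
    have hker : Θ *ᵥ x = 0 := (hΘ.dotProduct_mulVec_zero_iff x).mp h.symm
    have : Θ.det = 0 := (Matrix.exists_mulVec_eq_zero_iff).mp ⟨x, hx, hker⟩
    exact hdet.ne' this

lemma quadform_via_eigen (hn : 0 < n) {W : Matrix (Fin n) (Fin n) ℝ} (hW : W.PosDef) :
    ∃ δ > 0, ∀ x : Fin n → ℝ, δ * (x ⬝ᵥ x) ≤ x ⬝ᵥ (W *ᵥ x) := by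
  haveI : Nonempty (Fin n) := ⟨⟨0, hn⟩⟩
  set f := hW.isHermitian.eigenvalues with hf
  refine ⟨Finset.univ.inf' Finset.univ_nonempty f, ?_, ?_⟩
  · exact (Finset.lt_inf'_iff _).mpr fun i _ => hW.eigenvalues_pos i
  intro x
  set U : Matrix (Fin n) (Fin n) ℝ := (hW.isHermitian.eigenvectorUnitary : Matrix (Fin n) (Fin n) ℝ) with hU
  set y : Fin n → ℝ := Uᵀ *ᵥ x with hy
  have hyx : U *ᵥ y = x := by
    rw [hy, Matrix.mulVec_mulVec]
    have hsU : Uᵀ = star U := by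
      rw [← Matrix.conjTranspose_eq_transpose_of_trivial]; rfl
    rw [hsU, Matrix.mem_unitaryGroup_iff.mp (hW.isHermitian.eigenvectorUnitary).2,
      Matrix.one_mulVec]
  have hxx : x ⬝ᵥ x = y ⬝ᵥ y := by
    conv_rhs => rw [hy]
    rw [Matrix.dotProduct_mulVec, Matrix.vecMul_transpose, hyx, dotProduct_comm]
  have hWx : x ⬝ᵥ (W *ᵥ x) = ∑ i, f i * (y i)^2 := by
    conv_lhs => rw [hW.isHermitian.spectral_theorem, Unitary.conjStarAlgAut_apply]
    have hsU : star U = Uᵀ := by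
      rw [← Matrix.conjTranspose_eq_transpose_of_trivial]; rfl
    have hdiag : Matrix.diagonal (RCLike.ofReal ∘ f) = Matrix.diagonal f := by
      simp [RCLike.ofReal_real_eq_id]
    rw [← hU, hsU, hdiag]
    rw [← Matrix.mulVec_mulVec, ← Matrix.mulVec_mulVec, ← hy]
    rw [Matrix.dotProduct_mulVec x U, ← Matrix.mulVec_transpose, ← hy]
    rw [show y ⬝ᵥ (Matrix.diagonal f *ᵥ y) = ∑ i, y i * (f i * y i) by
      simp [Matrix.mulVec_diagonal, dotProduct]]
    exact Finset.sum_congr rfl fun i _ => by ring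
  rw [hWx, hxx, dotProduct, Finset.mul_sum]
  refine Finset.sum_le_sum fun i _ => ?_
  have h1 : Finset.univ.inf' Finset.univ_nonempty f ≤ f i := Finset.inf'_le _ (Finset.mem_univ i)
  have h2 : (0:ℝ) ≤ y i * y i := mul_self_nonneg _
  nlinarith [sq_nonneg (y i)]

lemma quad_abs_le (A : Matrix (Fin n) (Fin n) ℝ) (x : Fin n → ℝ) :
    |x ⬝ᵥ (A *ᵥ x)| ≤ (n : ℝ) * ‖A‖ * (x ⬝ᵥ x) := by
  have h1 : |x ⬝ᵥ (A *ᵥ x)| ≤ ∑ i, ∑ j, |x i| * |A i j| * |x j| := by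
    rw [dotProduct]
    refine (Finset.abs_sum_le_sum_abs _ _).trans ?_
    refine Finset.sum_le_sum fun i _ => ?_
    rw [Matrix.mulVec, dotProduct, Finset.mul_sum]
    refine (Finset.abs_sum_le_sum_abs _ _).trans ?_
    refine Finset.sum_le_sum fun j _ => ?_
    rw [abs_mul, abs_mul]; ring_nf; exact le_refl _
  have h2 : ∑ i, ∑ j, |x i| * |A i j| * |x j| ≤ ‖A‖ * (∑ i, |x i|)^2 := by
    rw [sq, Finset.sum_mul_sum, Finset.mul_sum]
    refine Finset.sum_le_sum fun i _ => ?_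
    rw [Finset.mul_sum]
    refine Finset.sum_le_sum fun j _ => ?_
    have := Matrix.norm_entry_le_entrywise_sup_norm A (i := i) (j := j)
    rw [Real.norm_eq_abs] at this
    have h0 : (0:ℝ) ≤ |x i| * |x j| := by positivity
    nlinarith [abs_nonneg (x i), abs_nonneg (x j), abs_nonneg (A i j)]
  have h3 : (∑ i, |x i|)^2 ≤ (n:ℝ) * (x ⬝ᵥ x) := by
    have := sq_sum_le_card_mul_sum_sq (s := (Finset.univ : Finset (Fin n)))
      (f := fun i => |x i|)
    rw [Finset.card_univ, Fintype.card_fin] at this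
    refine this.trans (le_of_eq ?_)
    congr 1
    simp [dotProduct, sq_abs, sq]
  have hA : 0 ≤ ‖A‖ := norm_nonneg A
  calc |x ⬝ᵥ (A *ᵥ x)| ≤ ‖A‖ * (∑ i, |x i|)^2 := h1.trans h2
    _ ≤ ‖A‖ * ((n:ℝ) * (x ⬝ᵥ x)) := by nlinarith
    _ = (n : ℝ) * ‖A‖ * (x ⬝ᵥ x) := by ring

lemma dotProduct_self_nonneg' (x : Fin n → ℝ) : 0 ≤ x ⬝ᵥ x :=
  Finset.sum_nonneg fun i _ => mul_self_nonneg (x i)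

lemma trace_pairing_lower (hn : 0 < n) {W : Matrix (Fin n) (Fin n) ℝ} (hW : W.PosDef) :
    ∃ ε > 0, ∃ r > 0, ∀ V : Matrix (Fin n) (Fin n) ℝ, V.PosDef → ‖V - W‖ < r →
      ∀ Θ : Matrix (Fin n) (Fin n) ℝ, Θ.PosSemidef → ε * Θ.trace ≤ (V * Θ).trace := by
  obtain ⟨δ, hδ, hquad⟩ := quadform_via_eigen hn hW
  refine ⟨δ/2, by positivity, δ/(2*(n+1)), by positivity, ?_⟩
  intro V hV hVr Θ hΘ
  have hpsd : (V - (δ/2) • (1 : Matrix (Fin n) (Fin n) ℝ)).PosSemidef := by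
    refine Matrix.PosSemidef.of_dotProduct_mulVec_nonneg ?_ ?_
    · exact Matrix.IsHermitian.sub hV.isHermitian (by simp [Matrix.IsHermitian])
    · intro x
      rw [star_trivial]
      have hform : x ⬝ᵥ ((V - (δ/2) • (1 : Matrix (Fin n) (Fin n) ℝ)) *ᵥ x)
          = x ⬝ᵥ (W *ᵥ x) + x ⬝ᵥ ((V - W) *ᵥ x) - (δ/2) * (x ⬝ᵥ x) := by
        simp only [Matrix.sub_mulVec, Matrix.smul_mulVec, Matrix.one_mulVec,
          dotProduct_sub, dotProduct_smul, smul_eq_mul]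
        ring
      rw [hform]
      have h1 := hquad x
      have h2 := quad_abs_le (V - W) x
      have h3 : (n:ℝ) * ‖V - W‖ * (x ⬝ᵥ x) ≤ (δ/2) * (x ⬝ᵥ x) := by
        have hx := dotProduct_self_nonneg' x
        have hn1 : (n:ℝ) * ‖V - W‖ ≤ δ/2 := by
          have hnorm : (0:ℝ) ≤ ‖V - W‖ := norm_nonneg _
          have : (n:ℝ) * ‖V - W‖ ≤ (n:ℝ) * (δ/(2*(n+1))) := by
            apply mul_le_mul_of_nonneg_left hVr.le (by positivity)
          refine this.trans ?_
          have h4 : (n:ℝ) * (δ / (2 * ((n:ℝ) + 1))) = (δ/2) * ((n:ℝ)/((n:ℝ)+1)) := by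
            field_simp
          rw [h4]
          have h5 : (n:ℝ)/((n:ℝ)+1) ≤ 1 := by
            rw [div_le_one (by positivity)]
            linarith [Nat.cast_nonneg (α := ℝ) n]
          nlinarith
        nlinarith
      have habs := abs_le.mp h2
      linarith [habs.1]
  have hsplit : (V * Θ).trace = ((V - (δ/2) • (1 : Matrix (Fin n) (Fin n) ℝ)) * Θ).trace
      + (δ/2) * Θ.trace := by
    rw [Matrix.sub_mul, Matrix.smul_mul, Matrix.one_mul, Matrix.trace_sub, Matrix.trace_smul,
      smul_eq_mul]
    ring
  rw [hsplit]
  linarith [trace_mul_nonneg hpsd hΘ]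

lemma conj_posDef {B C : Matrix (Fin n) (Fin n) ℝ} (hB : B.PosDef) (hC : C.det ≠ 0) :
    (Cᴴ * B * C).PosDef := by
  refine Matrix.PosDef.of_dotProduct_mulVec_pos ?_ ?_
  · have h1 : (Cᴴ * B * C)ᴴ = Cᴴ * Bᴴ * C := by
      rw [Matrix.conjTranspose_mul, Matrix.conjTranspose_mul, Matrix.conjTranspose_conjTranspose,
        Matrix.mul_assoc]
    rw [Matrix.IsHermitian, h1, hB.isHermitian.eq]
  · intro x hx
    have hCx : C *ᵥ x ≠ 0 := by
      intro hc
      exact hC ((Matrix.exists_mulVec_eq_zero_iff).mp ⟨x, hx, hc⟩)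
    have hform : star x ⬝ᵥ ((Cᴴ * B * C) *ᵥ x) = star (C *ᵥ x) ⬝ᵥ (B *ᵥ (C *ᵥ x)) := by
      rw [star_trivial, star_trivial]
      rw [← Matrix.mulVec_mulVec, ← Matrix.mulVec_mulVec]
      rw [Matrix.dotProduct_mulVec x Cᴴ]
      congr 1
      rw [Matrix.conjTranspose_eq_transpose_of_trivial, Matrix.vecMul_transpose]
    rw [hform]
    exact hB.dotProduct_mulVec_pos hCx

lemma log_half_le {μ : ℝ} (hμ : 0 < μ) : Real.log μ / 2 ≤ Real.log ((1+μ)/2) := by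
  rw [← Real.log_sqrt hμ.le]
  apply Real.log_le_log (Real.sqrt_pos.mpr hμ)
  nlinarith [sq_nonneg (Real.sqrt μ - 1), Real.sq_sqrt hμ.le, Real.sqrt_nonneg μ]

lemma log_half_lt {μ : ℝ} (hμ : 0 < μ) (hμ1 : μ ≠ 1) :
    Real.log μ / 2 < Real.log ((1+μ)/2) := by
  rw [← Real.log_sqrt hμ.le]
  apply Real.log_lt_log (Real.sqrt_pos.mpr hμ)
  have hs1 : Real.sqrt μ ≠ 1 := fun hc => hμ1 (by rw [← Real.sq_sqrt hμ.le, hc, one_pow])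
  have := sq_nonneg (Real.sqrt μ - 1)
  rcases this.lt_or_eq with hlt | heq
  · nlinarith [Real.sq_sqrt hμ.le]
  · exfalso; apply hs1; nlinarith [Real.sq_sqrt hμ.le]


open scoped MatrixOrder in
lemma logdet_strict_midpoint {A B : Matrix (Fin n) (Fin n) ℝ} (hA : A.PosDef) (hB : B.PosDef)
    (hAB : A ≠ B) :
    (Real.log A.det + Real.log B.det) / 2 < Real.log (((1:ℝ)/2) • (A + B)).det := by
  set S := CFC.sqrt A with hSdef
  have hS : S * S = A := CFC.sqrt_mul_sqrt_self A hA.posSemidef.nonneg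
  have hSherm : S.IsHermitian := (CFC.sqrt_nonneg A).posSemidef.1
  have hdetS : S.det * S.det = A.det := by rw [← Matrix.det_mul, hS]
  have hdetSne : S.det ≠ 0 := by
    intro hc; rw [hc, mul_zero] at hdetS; exact hA.det_pos.ne' hdetS.symm
  have hSinv : S⁻¹ * S = 1 := Matrix.nonsing_inv_mul S (isUnit_iff_ne_zero.mpr hdetSne)
  have hSinv' : S * S⁻¹ = 1 := Matrix.mul_nonsing_inv S (isUnit_iff_ne_zero.mpr hdetSne)
  have hdetSinv : (S⁻¹).det ≠ 0 := by
    simp [Matrix.det_nonsing_inv, Ring.inverse_eq_inv', hdetSne]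
  set M := S⁻¹ * B * S⁻¹ with hMdef
  have hSinvherm : (S⁻¹).IsHermitian := hSherm.inv
  have hM : M.PosDef := by
    have : ((S⁻¹)ᴴ * B * S⁻¹).PosDef := conj_posDef hB hdetSinv
    rwa [hSinvherm.eq] at this
  have hBM : B = S * M * S := by
    rw [hMdef]
    calc B = (S * S⁻¹) * B * (S⁻¹ * S) := by rw [hSinv', hSinv, Matrix.one_mul, Matrix.mul_one]
      _ = S * (S⁻¹ * B * S⁻¹) * S := by noncomm_ring
  have hdetB : B.det = A.det * M.det := by
    rw [hBM, Matrix.det_mul, Matrix.det_mul]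
    rw [← hdetS]; ring
  have hMne : M ≠ 1 := by
    intro hc
    apply hAB
    rw [hBM, hc, Matrix.mul_one, hS]
  -- eigenvalues of M
  set μ := hM.isHermitian.eigenvalues with hμdef
  have hμpos : ∀ i, 0 < μ i := hM.eigenvalues_pos
  set U : Matrix (Fin n) (Fin n) ℝ := (hM.isHermitian.eigenvectorUnitary : Matrix (Fin n) (Fin n) ℝ) with hUdef
  have hUU : U * star U = 1 := Matrix.mem_unitaryGroup_iff.mp (hM.isHermitian.eigenvectorUnitary).2
  have hdiagμ : Matrix.diagonal (RCLike.ofReal ∘ μ) = Matrix.diagonal μ := by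
    simp [RCLike.ofReal_real_eq_id]
  have hspec : M = U * Matrix.diagonal μ * star U := by
    rw [← hdiagμ]; exact hM.isHermitian.spectral_theorem
  have hdetM : M.det = ∏ i, μ i := by
    rw [hM.isHermitian.det_eq_prod_eigenvalues]; simp [RCLike.ofReal_real_eq_id, hμdef]
  have hdet1M : (1 + M).det = ∏ i, (1 + μ i) := by
    have h1M : 1 + M = U * (Matrix.diagonal (fun i => 1 + μ i)) * star U := by
      have hone : (1 : Matrix (Fin n) (Fin n) ℝ) = U * 1 * star U := by
        rw [Matrix.mul_one, hUU]
      conv_lhs => rw [hone, hspec]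
      rw [← Matrix.add_mul, ← Matrix.mul_add]
      congr 2
      rw [← Matrix.diagonal_one, Matrix.diagonal_add]
    rw [h1M, Matrix.det_mul, Matrix.det_mul, Matrix.det_diagonal]
    have : U.det * (star U).det = 1 := by
      rw [← Matrix.det_mul, hUU, Matrix.det_one]
    calc U.det * (∏ i, (1 + μ i)) * (star U).det
        = (U.det * (star U).det) * ∏ i, (1 + μ i) := by ring
      _ = ∏ i, (1 + μ i) := by rw [this, one_mul]
  have hexist : ∃ i, μ i ≠ 1 := by
    by_contra hc
    push_neg at hc
    apply hMne
    rw [hspec]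
    have : Matrix.diagonal μ = 1 := by
      rw [← Matrix.diagonal_one]
      exact congrArg Matrix.diagonal (funext fun i => hc i)
    rw [this, Matrix.mul_one, hUU]
  obtain ⟨i₀, hi₀⟩ := hexist
  -- compute determinant of midpoint
  have hmid : (((1:ℝ)/2) • (A + B)).det = A.det * ∏ i, ((1 + μ i)/2) := by
    have hkey : ((1:ℝ)/2) • (A + B) = S * (((1:ℝ)/2) • (1 + M)) * S := by
      rw [Matrix.mul_smul, Matrix.smul_mul]
      congr 1
      rw [Matrix.mul_add, Matrix.add_mul, Matrix.mul_one, hS, ← hBM]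
    rw [hkey, Matrix.det_mul, Matrix.det_mul, Matrix.det_smul, hdet1M]
    rw [Finset.prod_div_distrib]
    simp only [Finset.prod_const, Finset.card_univ, Fintype.card_fin, smul_eq_mul]
    rw [← hdetS]
    field_simp
    rw [mul_comm, ← mul_assoc, ← mul_pow]; norm_num
  rw [hmid]
  have hprodpos : ∀ i, (0:ℝ) < (1 + μ i)/2 := fun i => by linarith [hμpos i]
  rw [Real.log_mul hA.det_pos.ne' (Finset.prod_pos (fun i _ => hprodpos i)).ne']
  rw [Real.log_prod (fun i _ => (hprodpos i).ne')]
  rw [hdetB, Real.log_mul hA.det_pos.ne' (by rw [hdetM]; exact (Finset.prod_pos (fun i _ => hμpos i)).ne')]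
  rw [hdetM, Real.log_prod (fun i _ => (hμpos i).ne')]
  have hsum : ∑ i, Real.log (μ i) / 2 < ∑ i, Real.log ((1 + μ i)/2) := by
    apply Finset.sum_lt_sum (fun i _ => log_half_le (hμpos i))
    exact ⟨i₀, Finset.mem_univ i₀, log_half_lt (hμpos i₀) hi₀⟩
  rw [← Finset.sum_div] at hsum
  linarith

lemma posDef_smul_half {A : Matrix (Fin n) (Fin n) ℝ} (hA : A.PosDef) :
    (((1:ℝ)/2) • A).PosDef := by
  refine Matrix.PosDef.of_dotProduct_mulVec_pos ?_ ?_
  · rw [Matrix.IsHermitian, Matrix.conjTranspose_smul]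
    rw [star_trivial ((1:ℝ)/2), hA.isHermitian.eq]
  · intro x hx
    rw [star_trivial, Matrix.smul_mulVec, dotProduct_smul, smul_eq_mul]
    have := hA.dotProduct_mulVec_pos hx
    rw [star_trivial] at this
    positivity

lemma maxProp_unique {Z : Set (Fin n × Fin n)} {V Θ₁ Θ₂ : Matrix (Fin n) (Fin n) ℝ}
    (h1 : maxProp n Z V Θ₁) (h2 : maxProp n Z V Θ₂) : Θ₁ = Θ₂ := by
  by_contra hne
  obtain ⟨hPD1, hfeas1, hmax1⟩ := h1
  obtain ⟨hPD2, hfeas2, hmax2⟩ := h2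
  have e1 := hmax1 Θ₂ hPD2 hfeas2
  have e2 := hmax2 Θ₁ hPD1 hfeas1
  set Θm : Matrix (Fin n) (Fin n) ℝ := ((1:ℝ)/2) • (Θ₁ + Θ₂) with hΘm
  have hPDm : Θm.PosDef := posDef_smul_half (hPD1.add hPD2)
  have hfeasm : ∀ p ∈ Z, Θm p.1 p.2 = 0 := by
    intro p hp
    rw [hΘm, Matrix.smul_apply, Matrix.add_apply, hfeas1 p hp, hfeas2 p hp]
    simp
  have hm := hmax1 Θm hPDm hfeasm
  have htr : (V * Θm).trace = ((V * Θ₁).trace + (V * Θ₂).trace) / 2 := by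
    rw [hΘm, Matrix.mul_smul, Matrix.mul_add, Matrix.trace_smul, Matrix.trace_add, smul_eq_mul]
    ring
  have hlog := logdet_strict_midpoint hPD1 hPD2 hne
  rw [htr] at hm
  linarith




lemma tendsto_trace_mul {n : ℕ} {Vs H : ℕ → Matrix (Fin n) (Fin n) ℝ}
    {V₀ Θs : Matrix (Fin n) (Fin n) ℝ}
    (h1 : Filter.Tendsto Vs Filter.atTop (nhds V₀))
    (h2 : Filter.Tendsto H Filter.atTop (nhds Θs)) :
    Filter.Tendsto (fun k => ((Vs k) * (H k)).trace) Filter.atTop (nhds ((V₀ * Θs).trace)) := by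
  have hmul : Filter.Tendsto (fun k => (Vs k) * (H k)) Filter.atTop (nhds (V₀ * Θs)) := by
    exact h1.mul h2
  exact ((continuous_id.matrix_trace.tendsto (V₀ * Θs))).comp hmul

set_option maxHeartbeats 2000000 in
theorem key_continuity (n : ℕ) (hn : 0 < n)
    (Z : Set (Fin n × Fin n)) (hZoffdiag : ∀ p ∈ Z, p.1 ≠ p.2)
    (h : Matrix (Fin n) (Fin n) ℝ → Matrix (Fin n) (Fin n) ℝ)
    (hh : ∀ V : Matrix (Fin n) (Fin n) ℝ, V.PosDef → maxProp n Z V (h V)) :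
    ContinuousOn h {V : Matrix (Fin n) (Fin n) ℝ | V.PosDef} := by
  intro V₀ hV₀mem
  simp only [Set.mem_setOf_eq] at hV₀mem
  obtain ⟨ε, hε, r, hr, hεr⟩ := trace_pairing_lower hn hV₀mem
  have hn' : (0:ℝ) < n := Nat.cast_pos.mpr hn
  set m : ℝ := -(V₀.trace + n * r) with hmdef
  have hlow : ∀ V : Matrix (Fin n) (Fin n) ℝ, V.PosDef → ‖V - V₀‖ < r →
      m ≤ Real.log (h V).det - (V * h V).trace := by
    intro V hV hVr
    have h1 := (hh V hV).2.2 1 Matrix.PosDef.one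
      (fun p hp => Matrix.one_apply_ne (hZoffdiag p hp))
    have h2 : Real.log (1 : Matrix (Fin n) (Fin n) ℝ).det
        - (V * 1).trace = -V.trace := by simp
    rw [h2] at h1
    have h3 : V.trace ≤ V₀.trace + n * r := by
      have h5 : V.trace - V₀.trace = (V - V₀).trace := by rw [Matrix.trace_sub]
      have h4 : (V - V₀).trace ≤ n * ‖V - V₀‖ := by
        rw [Matrix.trace]
        calc ∑ i, (V - V₀).diag i ≤ ∑ _i : Fin n, ‖V - V₀‖ :=
              Finset.sum_le_sum fun i _ => (le_abs_self _).trans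
                ((Real.norm_eq_abs _ ▸ Matrix.norm_entry_le_entrywise_sup_norm (V - V₀)))
          _ = n * ‖V - V₀‖ := by
              rw [Finset.sum_const, Finset.card_univ, Fintype.card_fin, nsmul_eq_mul]
      have h6 : (n:ℝ) * ‖V - V₀‖ ≤ n * r := mul_le_mul_of_nonneg_left hVr.le hn'.le
      linarith
    linarith
  set a : ℝ := 2 * n / ε with hadef
  have ha0 : 0 < a := by positivity
  set T : ℝ := (n * Real.log a - n - m) * 2 / ε with hTdef
  have htrace_bound : ∀ V : Matrix (Fin n) (Fin n) ℝ, V.PosDef → ‖V - V₀‖ < r →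
      (h V).trace ≤ T := by
    intro V hV hVr
    have hPD := (hh V hV).1
    have ht0 : 0 < (h V).trace := pd_trace_pos hn hPD
    set t : ℝ := (h V).trace with htdef
    have hub : Real.log (h V).det ≤ n * Real.log t := by
      calc Real.log (h V).det ≤ Real.log (t ^ n) :=
            Real.log_le_log hPD.det_pos (pd_det_le_trace_pow hPD)
        _ = n * Real.log t := by rw [Real.log_pow]
    have hpair : ε * t ≤ (V * h V).trace := hεr V hV hVr _ hPD.posSemidef
    have hlow' := hlow V hV hVr
    have hloga : Real.log t ≤ Real.log a + (t / a - 1) := by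
      have h5 : t = a * (t / a) := by field_simp
      calc Real.log t = Real.log a + Real.log (t / a) := by
            rw [← Real.log_mul ha0.ne' (by positivity), ← h5]
        _ ≤ Real.log a + (t / a - 1) :=
            add_le_add_right (Real.log_le_sub_one_of_pos (by positivity)) _
    have hna : (n:ℝ) / a = ε / 2 := by
      rw [hadef]; field_simp
    have hmul : (n:ℝ) * Real.log t ≤ n * Real.log a + (ε/2) * t - n := by
      have h7 : (n:ℝ) * Real.log t ≤ n * (Real.log a + (t / a - 1)) :=
        mul_le_mul_of_nonneg_left hloga hn'.le
      have h8 : (n:ℝ) * (Real.log a + (t / a - 1)) = n * Real.log a + ((n:ℝ)/a) * t - n := by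
        ring
      rw [h8, hna] at h7
      exact h7
    have h9 : (ε/2) * t ≤ n * Real.log a - n - m := by linarith
    rw [hTdef, le_div_iff₀ hε]
    linarith
  set T' : ℝ := max T 0 with hT'def
  have hnorm_bound : ∀ V : Matrix (Fin n) (Fin n) ℝ, V.PosDef → ‖V - V₀‖ < r →
      ‖h V‖ ≤ T' := by
    intro V hV hVr
    rw [Matrix.norm_le_iff (le_max_right T 0)]
    intro i j
    rw [Real.norm_eq_abs]
    exact (psd_entry_abs_le_trace (hh V hV).1.posSemidef i j).trans
      ((htrace_bound V hV hVr).trans (le_max_left T 0))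
  have hdet_lb : ∀ V : Matrix (Fin n) (Fin n) ℝ, V.PosDef → ‖V - V₀‖ < r →
      Real.exp m ≤ (h V).det := by
    intro V hV hVr
    have hPD := (hh V hV).1
    have htr0 : 0 ≤ (V * h V).trace := trace_mul_nonneg hV.posSemidef hPD.posSemidef
    have h10 : m ≤ Real.log (h V).det := by linarith [hlow V hV hVr]
    calc Real.exp m ≤ Real.exp (Real.log (h V).det) := Real.exp_le_exp.mpr h10
      _ = (h V).det := Real.exp_log hPD.det_pos
  -- sequential compactness argument
  by_contra hcon
  erw [Metric.continuousWithinAt_iff] at hcon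
  push_neg at hcon
  obtain ⟨ε₁, hε₁, hseq⟩ := hcon
  choose Vs hVsS hVsd hVsfar using fun k : ℕ => hseq (min r (1/((k:ℝ)+1))) (by positivity)
  have hVsPD : ∀ k, (Vs k).PosDef := fun k => hVsS k
  have hVsr : ∀ k, ‖Vs k - V₀‖ < r := fun k => by
    have := (hVsd k).trans_le (min_le_left _ _)
    rwa [dist_eq_norm] at this
  have hVstend : Filter.Tendsto Vs Filter.atTop (nhds V₀) := by
    refine tendsto_iff_dist_tendsto_zero.mpr ?_
    apply squeeze_zero (fun k => dist_nonneg)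
      (fun k => ((hVsd k).trans_le (min_le_right _ _)).le)
    exact tendsto_one_div_add_atTop_nhds_zero_nat
  have hmem : ∀ k, h (Vs k) ∈ Metric.closedBall (0 : Matrix (Fin n) (Fin n) ℝ) T' := fun k =>
    Metric.mem_closedBall.mpr (by
      rw [dist_zero_right]; exact hnorm_bound _ (hVsPD k) (hVsr k))
  obtain ⟨Θs, hΘsK, φ, hφ, hHtend⟩ :=
    (isCompact_closedBall (0 : Matrix (Fin n) (Fin n) ℝ) T').tendsto_subseq hmem
  have hWtend : Filter.Tendsto (fun k => Vs (φ k)) Filter.atTop (nhds V₀) :=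
    hVstend.comp hφ.tendsto_atTop
  have hΘsPSD : Θs.PosSemidef := by
    refine Matrix.PosSemidef.of_dotProduct_mulVec_nonneg ?_ ?_
    · have h1 : Filter.Tendsto (fun k => (h (Vs (φ k)))ᴴ) Filter.atTop (nhds Θsᴴ) :=
        ((continuous_id.matrix_conjTranspose.tendsto Θs)).comp hHtend
      have h2 : (fun k => (h (Vs (φ k)))ᴴ) = fun k => h (Vs (φ k)) :=
        funext fun k => (hh _ (hVsPD _)).1.isHermitian.eq
      rw [h2] at h1
      exact tendsto_nhds_unique h1 hHtend
    · intro x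
      rw [star_trivial]
      have hc : Continuous (fun Θ : Matrix (Fin n) (Fin n) ℝ => x ⬝ᵥ (Θ *ᵥ x)) :=
        continuous_const.dotProduct (continuous_id.matrix_mulVec continuous_const)
      refine ge_of_tendsto' ((hc.tendsto Θs).comp hHtend) fun k => ?_
      have := (hh _ (hVsPD (φ k))).1.posSemidef.dotProduct_mulVec_nonneg x
      rwa [star_trivial] at this
  have hdetc : Filter.Tendsto (fun k => (h (Vs (φ k))).det) Filter.atTop (nhds Θs.det) :=
    ((continuous_id.matrix_det.tendsto Θs)).comp hHtend
  have hΘsdet : Real.exp m ≤ Θs.det :=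
    ge_of_tendsto' hdetc fun k => hdet_lb _ (hVsPD (φ k)) (hVsr (φ k))
  have hΘsPD : Θs.PosDef :=
    posDef_of_posSemidef_det_pos hΘsPSD ((Real.exp_pos m).trans_le hΘsdet)
  have hΘsfeas : ∀ p ∈ Z, Θs p.1 p.2 = 0 := by
    intro p hp
    have h1 : Filter.Tendsto (fun k => h (Vs (φ k)) p.1 p.2) Filter.atTop
        (nhds (Θs p.1 p.2)) := (((continuous_id.matrix_elem p.1 p.2).tendsto Θs)).comp hHtend
    have h2 : (fun k => h (Vs (φ k)) p.1 p.2) = fun _ => (0:ℝ) :=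
      funext fun k => (hh _ (hVsPD _)).2.1 p hp
    rw [h2] at h1
    exact tendsto_nhds_unique h1 tendsto_const_nhds
  have hΘsmax : maxProp n Z V₀ Θs := by
    refine ⟨hΘsPD, hΘsfeas, ?_⟩
    intro Θ' hΘ' hfeas'
    have hk : ∀ k, Real.log Θ'.det - (Vs (φ k) * Θ').trace ≤
        Real.log (h (Vs (φ k))).det - (Vs (φ k) * h (Vs (φ k))).trace :=
      fun k => (hh _ (hVsPD (φ k))).2.2 Θ' hΘ' hfeas'
    have hA : Filter.Tendsto (fun k => Real.log Θ'.det - (Vs (φ k) * Θ').trace)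
        Filter.atTop (nhds (Real.log Θ'.det - (V₀ * Θ').trace)) := by
      apply Filter.Tendsto.sub tendsto_const_nhds
      exact tendsto_trace_mul hWtend tendsto_const_nhds
    have hB : Filter.Tendsto
        (fun k => Real.log (h (Vs (φ k))).det - (Vs (φ k) * h (Vs (φ k))).trace)
        Filter.atTop (nhds (Real.log Θs.det - (V₀ * Θs).trace)) := by
      apply Filter.Tendsto.sub
      · exact (Real.continuousAt_log ((Real.exp_pos m).trans_le hΘsdet).ne').tendsto.comp hdetc
      · exact tendsto_trace_mul hWtend hHtend
    exact le_of_tendsto_of_tendsto' hA hB hk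
  have hΘseq : Θs = h V₀ := maxProp_unique hΘsmax (hh V₀ hV₀mem)
  have hdist : Filter.Tendsto (fun k => dist (h (Vs (φ k))) (h V₀)) Filter.atTop
      (nhds (dist Θs (h V₀))) := hHtend.dist tendsto_const_nhds
  have hfinal : ε₁ ≤ dist Θs (h V₀) :=
    ge_of_tendsto' hdist fun k => hVsfar (φ k)
  rw [hΘseq, dist_self] at hfinal
  linarith


end Helpers

/-- The map `h`, sending each positive definite real symmetric `n × n` matrix `V` to the
unique positive definite matrix in `C` maximizing `f(Θ; V) = log det Θ − tr (V Θ)` over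
positive definite `Θ ∈ C`, is continuous on the open cone of positive definite matrices. -/
theorem continuousOn_constrained_maximizer (n : ℕ) (hn : 0 < n)
    (Z : Set (Fin n × Fin n)) (hZoffdiag : ∀ p ∈ Z, p.1 ≠ p.2)
    (hZsymm : ∀ i j : Fin n, (i, j) ∈ Z → (j, i) ∈ Z)
    (h : Matrix (Fin n) (Fin n) ℝ → Matrix (Fin n) (Fin n) ℝ)
    (hh : ∀ V : Matrix (Fin n) (Fin n) ℝ, V.PosDef → maxProp n Z V (h V)) :
    ContinuousOn h {V : Matrix (Fin n) (Fin n) ℝ | V.PosDef} :=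
  key_continuity n hn Z hZoffdiag h hh
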